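/- Forward 2-switching lower bound: for every simple graph G with degree sequence d containing the edge uv and avoiding all edges of M (where uv ∉ M), the number of ordered pairs (x,y) of vertices such that xy ∈ G, xy ≠ uv, {x,y} ∩ {u,v} = ∅, and neither ux nor vy lies in G ∪ M, is at least 2m(G) - D(d_u + m_u) - D(d_v + m_v), where m_w is the degree of w in M and D(k) is the sum of the k largest entries of d. -/

import Mathlib

open Finset SimpleGraph

/-- Sum of the `k` largest entries of `d`. -/
def Dsum {V : Type*} [Fintype V] (d : V → ℕ) (k : ℕ) : ℕ :=
  (Finset.univ.powerset.filter (fun S => S.card ≤ k)).sup (fun S => ∑ w ∈ S, d w)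

theorem forward_two_switch_lower {V : Type*} [Fintype V] [DecidableEq V] (d : V → ℕ)
    (G M : SimpleGraph V) (u v : V)
    (hdeg : ∀ w, (G.neighborSet w).ncard = d w)
    (huv : G.Adj u v) (hGM : Disjoint G M) (hMuv : ¬ M.Adj u v) :
    (∑ w, (d w : ℝ)) - (Dsum d (d u + (M.neighborSet u).ncard) : ℝ)
        - (Dsum d (d v + (M.neighborSet v).ncard) : ℝ)
      ≤ ({p : V × V | G.Adj p.1 p.2 ∧ s(p.1, p.2) ≠ s(u, v)
            ∧ p.1 ≠ u ∧ p.1 ≠ v ∧ p.2 ≠ u ∧ p.2 ≠ v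
            ∧ ¬ (G ⊔ M).Adj u p.1 ∧ ¬ (G ⊔ M).Adj v p.2}).ncard := by
  classical
  have hne : u ≠ v := huv.ne
  -- neighbor finsets
  set nbr : SimpleGraph V → V → Finset V := fun H w => univ.filter (fun x => H.Adj w x) with hnbr
  have hcard : ∀ (H : SimpleGraph V) (w : V), (nbr H w).card = (H.neighborSet w).ncard := by
    intro H w
    rw [← Set.ncard_coe_finset]
    congr 1
    ext x; simp [hnbr, SimpleGraph.neighborSet]
  have hdG : ∀ w, (nbr G w).card = d w := fun w => by rw [hcard, hdeg]
  have hGM' : ∀ x y, G.Adj x y → M.Adj x y → False := by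
    intro x y h1 h2
    simpa using hGM.le_bot (⟨h1, h2⟩ : (G ⊓ M).Adj x y)
  have hsup : ∀ w, (nbr (G ⊔ M) w).card = d w + (M.neighborSet w).ncard := by
    intro w
    have hun : nbr (G ⊔ M) w = nbr G w ∪ nbr M w := by
      ext x; simp [hnbr, sup_adj]
    have hdis : Disjoint (nbr G w) (nbr M w) := by
      rw [Finset.disjoint_left]
      intro x hx hx'
      simp only [hnbr, mem_filter] at hx hx'
      exact hGM' w x hx.2 hx'.2
    rw [hun, Finset.card_union_of_disjoint hdis, hdG, hcard]
  -- the set of ordered adjacent pairs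
  set E : Finset (V × V) := univ.filter (fun p : V × V => G.Adj p.1 p.2) with hE
  have hEcard : E.card = ∑ w, d w := by
    have : E = univ.biUnion (fun x => (nbr G x).image (Prod.mk x)) := by
      ext ⟨a, b⟩
      simp only [hE, hnbr, mem_filter, mem_univ, true_and, mem_biUnion, mem_image,
        Prod.mk.injEq]
      aesop
    rw [this, Finset.card_biUnion]
    · refine Finset.sum_congr rfl fun x _ => ?_
      rw [Finset.card_image_of_injective _ (fun a b h => by simpa using h), hdG]
    · intro x _ y _ hxy
      rw [Function.onFun, Finset.disjoint_left]
      rintro p hp hp'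
      simp only [mem_image] at hp hp'
      obtain ⟨a, -, rfl⟩ := hp
      obtain ⟨b, -, hb⟩ := hp'
      exact hxy (by simpa using (Prod.mk.injEq _ _ _ _).mp hb.symm |>.1)
  -- filter bounds
  have hfilter1 : ∀ S : Finset V, (E.filter fun p => p.1 ∈ S).card ≤ ∑ x ∈ S, d x := by
    intro S
    have hsub : (E.filter fun p => p.1 ∈ S) ⊆ S.biUnion (fun x => (nbr G x).image (Prod.mk x)) := by
      intro p hp
      simp only [hE, mem_filter, mem_univ, true_and] at hp
      simp only [mem_biUnion, mem_image]
      exact ⟨p.1, hp.2, p.2, by simp [hnbr, hp.1], rfl⟩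
    calc (E.filter fun p => p.1 ∈ S).card ≤ _ := Finset.card_le_card hsub
      _ ≤ ∑ x ∈ S, ((nbr G x).image (Prod.mk x)).card := Finset.card_biUnion_le
      _ ≤ ∑ x ∈ S, d x := Finset.sum_le_sum fun x _ => by
            rw [← hdG x]; exact Finset.card_image_le
  have hfilter2 : ∀ S : Finset V, (E.filter fun p => p.2 ∈ S).card ≤ ∑ x ∈ S, d x := by
    intro S
    have hsub : (E.filter fun p => p.2 ∈ S) ⊆
        S.biUnion (fun y => (nbr G y).image (fun x => (x, y))) := by
      intro p hp
      simp only [hE, mem_filter, mem_univ, true_and] at hp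
      simp only [mem_biUnion, mem_image]
      exact ⟨p.2, hp.2, p.1, by simp [hnbr, hp.1.symm], rfl⟩
    calc (E.filter fun p => p.2 ∈ S).card ≤ _ := Finset.card_le_card hsub
      _ ≤ ∑ x ∈ S, ((nbr G x).image _).card := Finset.card_biUnion_le
      _ ≤ ∑ x ∈ S, d x := Finset.sum_le_sum fun x _ => by
            rw [← hdG x]; exact Finset.card_image_le
  have hD : ∀ (S : Finset V) (k : ℕ), S.card ≤ k → ∑ x ∈ S, d x ≤ Dsum d k := by
    intro S k h
    have hmem : S ∈ (Finset.univ.powerset.filter (fun S : Finset V => S.card ≤ k)) := by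
      rw [Finset.mem_filter, Finset.mem_powerset]
      exact ⟨Finset.subset_univ _, h⟩
    unfold Dsum
    exact Finset.le_sup (f := fun S => ∑ w ∈ S, d w) hmem
  -- bad-coordinate sets
  set Au : Finset V := insert u (nbr (G ⊔ M) u) with hAu
  set Bv : Finset V := insert v (nbr (G ⊔ M) v) with hBv
  set P1 : Finset (V × V) := E.filter (fun p => p.1 ∈ Au) with hP1def
  set P2 : Finset (V × V) := E.filter (fun p => p.2 ∈ Bv) with hP2def
  set GoodF : Finset (V × V) := univ.filter (fun p : V × V => G.Adj p.1 p.2 ∧ s(p.1, p.2) ≠ s(u, v)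
            ∧ p.1 ≠ u ∧ p.1 ≠ v ∧ p.2 ≠ u ∧ p.2 ≠ v
            ∧ ¬ (G ⊔ M).Adj u p.1 ∧ ¬ (G ⊔ M).Adj v p.2) with hGoodF
  have hvAu : v ∈ nbr (G ⊔ M) u := by simp [hnbr, sup_adj, huv]
  have huBv : u ∈ nbr (G ⊔ M) v := by simp [hnbr, sup_adj, huv.symm]
  have hEsub : E ⊆ GoodF ∪ (P1 ∪ P2) := by
    intro p hp
    have hadj : G.Adj p.1 p.2 := by simpa [hE] using hp
    by_cases h1 : p.1 ∈ Au
    · exact Finset.mem_union_right _ (Finset.mem_union_left _ (by simp [hP1def, hE, hadj, h1]))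
    by_cases h2 : p.2 ∈ Bv
    · exact Finset.mem_union_right _ (Finset.mem_union_right _ (by simp [hP2def, hE, hadj, h2]))
    refine Finset.mem_union_left _ ?_
    simp only [hAu, hBv, Finset.mem_insert, hnbr, mem_filter, mem_univ, true_and,
      not_or] at h1 h2
    have hp1u : p.1 ≠ u := h1.1
    have hp1v : p.1 ≠ v := fun h => h1.2 (h ▸ (by simpa [hnbr] using hvAu))
    have hp2v : p.2 ≠ v := h2.1
    have hp2u : p.2 ≠ u := fun h => h2.2 (h ▸ (by simpa [hnbr] using huBv))
    have hsym : s(p.1, p.2) ≠ s(u, v) := by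
      intro hc
      rw [Sym2.eq_iff] at hc
      rcases hc with ⟨h, -⟩ | ⟨h, -⟩
      · exact hp1u h
      · exact hp1v h
    simp only [hGoodF, mem_filter, mem_univ, true_and]
    exact ⟨hadj, hsym, hp1u, hp1v, hp2u, hp2v, h1.2, h2.2⟩
  -- bounds for P1, P2
  have hP1card : P1.card ≤ d u + Dsum d (d u + (M.neighborSet u).ncard) := by
    have hsplit : P1 ⊆ (E.filter fun p => p.1 ∈ ({u} : Finset V)) ∪
        (E.filter fun p => p.1 ∈ nbr (G ⊔ M) u) := by
      intro p hp
      simp only [hP1def, hAu, mem_filter, Finset.mem_insert] at hp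
      rcases hp.2 with h | h
      · exact Finset.mem_union_left _ (Finset.mem_filter.mpr ⟨hp.1, by simp [h]⟩)
      · exact Finset.mem_union_right _ (Finset.mem_filter.mpr ⟨hp.1, h⟩)
    calc P1.card ≤ _ := Finset.card_le_card hsplit
      _ ≤ _ := Finset.card_union_le _ _
      _ ≤ (∑ x ∈ ({u} : Finset V), d x) + ∑ x ∈ nbr (G ⊔ M) u, d x :=
          Nat.add_le_add (hfilter1 _) (hfilter1 _)
      _ ≤ d u + Dsum d (d u + (M.neighborSet u).ncard) := by
          refine Nat.add_le_add (by simp) (hD _ _ ?_)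
          rw [hsup u]
  have hP2card : P2.card ≤ d v + Dsum d (d v + (M.neighborSet v).ncard) := by
    have hsplit : P2 ⊆ (E.filter fun p => p.2 ∈ ({v} : Finset V)) ∪
        (E.filter fun p => p.2 ∈ nbr (G ⊔ M) v) := by
      intro p hp
      simp only [hP2def, hBv, mem_filter, Finset.mem_insert] at hp
      rcases hp.2 with h | h
      · exact Finset.mem_union_left _ (Finset.mem_filter.mpr ⟨hp.1, by simp [h]⟩)
      · exact Finset.mem_union_right _ (Finset.mem_filter.mpr ⟨hp.1, h⟩)
    calc P2.card ≤ _ := Finset.card_le_card hsplit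
      _ ≤ _ := Finset.card_union_le _ _
      _ ≤ (∑ x ∈ ({v} : Finset V), d x) + ∑ x ∈ nbr (G ⊔ M) v, d x :=
          Nat.add_le_add (hfilter2 _) (hfilter2 _)
      _ ≤ d v + Dsum d (d v + (M.neighborSet v).ncard) := by
          refine Nat.add_le_add (by simp) (hD _ _ ?_)
          rw [hsup v]
  -- overlap lower bound
  set F1 : Finset (V × V) := (nbr G u).image (fun x => (x, u)) with hF1
  set F2 : Finset (V × V) := (nbr G v).image (fun y => (v, y)) with hF2
  set T : Finset (V × V) := insert (u, v) (F1 ∪ F2) with hT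
  have hTsub : T ⊆ P1 ∩ P2 := by
    intro p hp
    simp only [hT, Finset.mem_insert, Finset.mem_union, hF1, hF2, mem_image, hnbr,
      mem_filter, mem_univ, true_and] at hp
    rw [Finset.mem_inter]
    rcases hp with rfl | ⟨x, hx, rfl⟩ | ⟨y, hy, rfl⟩
    · constructor
      · simp [hP1def, hE, hAu, huv]
      · simp [hP2def, hE, hBv, huv]
    · constructor
      · simp [hP1def, hE, hAu, hnbr, hx.symm, sup_adj, hx]
      · simp [hP2def, hE, hBv, hnbr, hx.symm, sup_adj, huv.symm]
    · constructor
      · simp [hP1def, hE, hAu, hnbr, hy, sup_adj, huv]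
      · simp [hP2def, hE, hBv, hnbr, hy, sup_adj]
  have hTcard : d u + d v ≤ T.card := by
    have hF1card : F1.card = d u := by
      rw [hF1, Finset.card_image_of_injective _ (fun a b h => by simpa using h), hdG]
    have hF2card : F2.card = d v := by
      rw [hF2, Finset.card_image_of_injective _ (fun a b h => by simpa using h), hdG]
    have hkey : ∀ p ∈ F1 ∩ F2, p = (v, u) := by
      intro p hp
      simp only [Finset.mem_inter, hF1, hF2, mem_image] at hp
      obtain ⟨⟨a, -, ha⟩, ⟨b, -, hb⟩⟩ := hp
      have h2 : p.2 = u := by rw [← ha]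
      have h1 : p.1 = v := by rw [← hb]
      exact Prod.ext h1 h2
    have hinter : (F1 ∩ F2).card ≤ 1 :=
      Finset.card_le_one.mpr (fun p hp q hq => by rw [hkey p hp, hkey q hq])
    have huvnot : (u, v) ∉ F1 ∪ F2 := by
      intro h
      rcases Finset.mem_union.mp h with h | h
      · rw [hF1, Finset.mem_image] at h
        obtain ⟨a, -, ha⟩ := h
        exact hne ((Prod.mk.injEq _ _ _ _).mp ha).2
      · rw [hF2, Finset.mem_image] at h
        obtain ⟨a, -, ha⟩ := h
        exact hne ((Prod.mk.injEq _ _ _ _).mp ha).1.symm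
    have hcardT : T.card = (F1 ∪ F2).card + 1 := by
      rw [hT, Finset.card_insert_of_notMem huvnot]
    have hunion : F1.card + F2.card ≤ (F1 ∪ F2).card + 1 := by
      have := Finset.card_union_add_card_inter F1 F2
      omega
    omega
  -- combine in ℕ
  have hmain : (∑ w, d w) ≤ GoodF.card + Dsum d (d u + (M.neighborSet u).ncard)
      + Dsum d (d v + (M.neighborSet v).ncard) := by
    have h1 : E.card ≤ GoodF.card + (P1 ∪ P2).card :=
      le_trans (Finset.card_le_card hEsub) (Finset.card_union_le _ _)
    have h2 : (P1 ∪ P2).card + (P1 ∩ P2).card = P1.card + P2.card :=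
      Finset.card_union_add_card_inter _ _
    have h3 : d u + d v ≤ (P1 ∩ P2).card := le_trans hTcard (Finset.card_le_card hTsub)
    have h4 := hP1card
    have h5 := hP2card
    rw [hEcard] at h1
    omega
  -- conclude
  have hset : ({p : V × V | G.Adj p.1 p.2 ∧ s(p.1, p.2) ≠ s(u, v)
            ∧ p.1 ≠ u ∧ p.1 ≠ v ∧ p.2 ≠ u ∧ p.2 ≠ v
            ∧ ¬ (G ⊔ M).Adj u p.1 ∧ ¬ (G ⊔ M).Adj v p.2}) = ↑GoodF := by
    ext p; simp [hGoodF]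
  rw [hset, Set.ncard_coe_finset]
  have hcast : ((∑ w, d w : ℕ) : ℝ) ≤ (GoodF.card : ℝ)
      + (Dsum d (d u + (M.neighborSet u).ncard) : ℝ)
      + (Dsum d (d v + (M.neighborSet v).ncard) : ℝ) := by exact_mod_cast hmain
  push_cast at hcast
  linarith
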